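/- Assume that the zero set N := {(τ,j) ∈ ℤ^m × ℕ : ‖σ(τ,j)‖ = 0} is finite and that for every ε > 0 there exists C > 0 such that ‖σ(τ,j)‖ ≥ C·exp(−ε·w(τ,j)) for all (τ,j) with ‖σ(τ,j)‖ ≠ 0. Then the system is globally hypoelliptic at the Fourier coefficient level: every u : ℤ^m×ℕ → ℂ with GS-growth such that (τ,j) ↦ σ_r(τ,j)·u(τ,j) has GS-decay for each 1 ≤ r ≤ ℓ itself has GS-decay. -/

import Mathlib

open Real

/-- Euclidean norm of an integer vector `τ ∈ ℤ^m`. -/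
noncomputable def eNormZ {m : ℕ} (τ : Fin m → ℤ) : ℝ :=
  Real.sqrt (∑ i, ((τ i : ℝ)) ^ 2)

/-- The weight `w(τ,j) = ‖τ‖^(1/σ) + j^(1/(2nμ))`. -/
noncomputable def wgt (m n : ℕ) (σ μ : ℝ) (τ : Fin m → ℤ) (j : ℕ) : ℝ :=
  eNormZ τ ^ (1 / σ) + (j : ℝ) ^ (1 / (2 * n * μ))

/-- GS-decay: `|a(τ,j)| ≤ C exp(-ε w(τ,j))` for some `C, ε > 0`. -/
def GSDecay (m n : ℕ) (σ μ : ℝ) (a : (Fin m → ℤ) → ℕ → ℂ) : Prop :=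
  ∃ C > 0, ∃ ε > 0, ∀ τ j, ‖a τ j‖ ≤ C * Real.exp (-ε * wgt m n σ μ τ j)

/-- GS-growth: for all `ε > 0` there is `C > 0` with `|a(τ,j)| ≤ C exp(ε w(τ,j))`. -/
def GSGrowth (m n : ℕ) (σ μ : ℝ) (a : (Fin m → ℤ) → ℕ → ℂ) : Prop :=
  ∀ ε > 0, ∃ C > 0, ∀ τ j, ‖a τ j‖ ≤ C * Real.exp (ε * wgt m n σ μ τ j)

/-- Symbol of the operator `L_r = Q_r(D_t) + d_r P(x,D_x)`: `σ_r(τ,j) = Q_r(τ) + d_r λ_j`. -/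
noncomputable def symb {m ℓ : ℕ} (Q : Fin ℓ → MvPolynomial (Fin m) ℂ)
    (d : Fin ℓ → ℂ) (lam : ℕ → ℝ) (r : Fin ℓ) (τ : Fin m → ℤ) (j : ℕ) : ℂ :=
  MvPolynomial.eval (fun i => ((τ i : ℂ))) (Q r) + d r * (lam j : ℂ)

/-- `‖σ(τ,j)‖ = max_{1 ≤ r ≤ ℓ} |σ_r(τ,j)|`. -/
noncomputable def symbNorm {m ℓ : ℕ} (Q : Fin ℓ → MvPolynomial (Fin m) ℂ)
    (d : Fin ℓ → ℂ) (lam : ℕ → ℝ) (τ : Fin m → ℤ) (j : ℕ) : ℝ :=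
  ⨆ r : Fin ℓ, ‖symb Q d lam r τ j‖

/-- The Diophantine condition (DC). -/
def DioCond (m n ℓ : ℕ) (σ μ : ℝ) (Q : Fin ℓ → MvPolynomial (Fin m) ℂ)
    (d : Fin ℓ → ℂ) (lam : ℕ → ℝ) : Prop :=
  ∀ ε > 0, ∃ C > 0, ∀ τ j, symbNorm Q d lam τ j ≠ 0 →
    symbNorm Q d lam τ j ≥ C * Real.exp (-ε * wgt m n σ μ τ j)

/-- Global hypoellipticity at the Fourier coefficient level. -/
def GloballyHypoelliptic (m n ℓ : ℕ) (σ μ : ℝ) (Q : Fin ℓ → MvPolynomial (Fin m) ℂ)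
    (d : Fin ℓ → ℂ) (lam : ℕ → ℝ) : Prop :=
  ∀ u : (Fin m → ℤ) → ℕ → ℂ, GSGrowth m n σ μ u →
    (∀ r : Fin ℓ, GSDecay m n σ μ (fun τ j => symb Q d lam r τ j * u τ j)) →
    GSDecay m n σ μ u

/-- Admissible families (compatibility conditions). -/
def Admissible {m ℓ : ℕ} (Q : Fin ℓ → MvPolynomial (Fin m) ℂ) (d : Fin ℓ → ℂ)
    (lam : ℕ → ℝ) (f : Fin ℓ → (Fin m → ℤ) → ℕ → ℂ) : Prop :=
  (∀ r s τ j, symb Q d lam r τ j * f s τ j = symb Q d lam s τ j * f r τ j) ∧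
  (∀ r τ j, symb Q d lam r τ j = 0 → f r τ j = 0)

/-- Global solvability at the Fourier coefficient level. -/
def GloballySolvable (m n ℓ : ℕ) (σ μ : ℝ) (Q : Fin ℓ → MvPolynomial (Fin m) ℂ)
    (d : Fin ℓ → ℂ) (lam : ℕ → ℝ) : Prop :=
  ∀ f : Fin ℓ → (Fin m → ℤ) → ℕ → ℂ, Admissible Q d lam f →
    (∀ r, GSGrowth m n σ μ (f r)) →
    ∃ u : (Fin m → ℤ) → ℕ → ℂ, GSGrowth m n σ μ u ∧
      ∀ r τ j, symb Q d lam r τ j * u τ j = f r τ j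

/-- if the zero set is finite and (DC) holds, the system is globally
hypoelliptic at the Fourier coefficient level. -/
theorem statement3 (m n ℓ : ℕ) (hm : 1 ≤ m) (hn : 1 ≤ n) (hℓ : 1 ≤ ℓ)
    (σ μ : ℝ) (hσ : 1 ≤ σ) (hμ : 1 / 2 ≤ μ)
    (Q : Fin ℓ → MvPolynomial (Fin m) ℂ) (d : Fin ℓ → ℂ) (lam : ℕ → ℝ)
    (hN : {p : (Fin m → ℤ) × ℕ | symbNorm Q d lam p.1 p.2 = 0}.Finite)
    (hDC : ∀ ε > 0, ∃ C > 0, ∀ τ j, symbNorm Q d lam τ j ≠ 0 →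
      symbNorm Q d lam τ j ≥ C * Real.exp (-ε * wgt m n σ μ τ j)) :
    ∀ u : (Fin m → ℤ) → ℕ → ℂ, GSGrowth m n σ μ u →
      (∀ r : Fin ℓ, GSDecay m n σ μ (fun τ j => symb Q d lam r τ j * u τ j)) →
      GSDecay m n σ μ u := by
  intro u hu hdec
  have hw : ∀ (τ : Fin m → ℤ) (j : ℕ), 0 ≤ wgt m n σ μ τ j := by
    intro τ j
    unfold wgt
    have h1 : (0:ℝ) ≤ eNormZ τ ^ (1/σ) := Real.rpow_nonneg (Real.sqrt_nonneg _) _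
    have h2 : (0:ℝ) ≤ (j:ℝ) ^ (1/(2*(n:ℝ)*μ)) := Real.rpow_nonneg (Nat.cast_nonneg j) _
    linarith
  choose C hC ε hε hbound using hdec
  have : NeZero ℓ := ⟨by omega⟩
  have hne : (Finset.univ : Finset (Fin ℓ)).Nonempty := Finset.univ_nonempty
  set ε0 : ℝ := Finset.univ.inf' hne ε with hε0def
  set C0 : ℝ := Finset.univ.sup' hne C with hC0def
  have hε0pos : 0 < ε0 := (Finset.lt_inf'_iff hne).2 (fun r _ => hε r)
  have hC0pos : 0 < C0 := by
    have ⟨r, hr⟩ := hne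
    exact (Finset.lt_sup'_iff hne).2 ⟨r, hr, hC r⟩
  have huni : ∀ (r : Fin ℓ) (τ : Fin m → ℤ) (j : ℕ),
      ‖symb Q d lam r τ j * u τ j‖ ≤ C0 * Real.exp (-ε0 * wgt m n σ μ τ j) := by
    intro r τ j
    have h1 := hbound r τ j
    have hCle : C r ≤ C0 := Finset.le_sup' C (Finset.mem_univ r)
    have hεle : ε0 ≤ ε r := Finset.inf'_le ε (Finset.mem_univ r)
    have hexp : Real.exp (-ε r * wgt m n σ μ τ j) ≤ Real.exp (-ε0 * wgt m n σ μ τ j) := by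
      apply Real.exp_le_exp.2
      nlinarith [hw τ j]
    calc ‖symb Q d lam r τ j * u τ j‖ ≤ C r * Real.exp (-ε r * wgt m n σ μ τ j) := h1
      _ ≤ C0 * Real.exp (-ε0 * wgt m n σ μ τ j) :=
        mul_le_mul hCle hexp (Real.exp_pos _).le hC0pos.le
  obtain ⟨C', hC'pos, hDC'⟩ := hDC (ε0/2) (by linarith)
  -- bound on the zero set
  set g : (Fin m → ℤ) × ℕ → ℝ :=
    fun p => ‖u p.1 p.2‖ * Real.exp ((ε0/2) * wgt m n σ μ p.1 p.2) with hg
  obtain ⟨K, hK⟩ := (hN.image g).bddAbove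
  set Cf : ℝ := max (C0 / C') (max K 1) with hCf
  have hCfpos : 0 < Cf := lt_of_lt_of_le one_pos (le_trans (le_max_right K 1) (le_max_right _ _))
  refine ⟨Cf, hCfpos, ε0/2, by linarith, ?_⟩
  intro τ j
  have hexppos := Real.exp_pos (-(ε0/2) * wgt m n σ μ τ j)
  by_cases hz : symbNorm Q d lam τ j = 0
  · have hmem : ((τ, j) : (Fin m → ℤ) × ℕ) ∈ {p : (Fin m → ℤ) × ℕ | symbNorm Q d lam p.1 p.2 = 0} := hz
    have hgK : g (τ, j) ≤ K := hK (Set.mem_image_of_mem g hmem)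
    have hKCf : K ≤ Cf := le_trans (le_max_left K 1) (le_max_right _ _)
    have : ‖u τ j‖ * Real.exp ((ε0/2) * wgt m n σ μ τ j) ≤ Cf := le_trans hgK hKCf
    have heq : Real.exp (-(ε0/2) * wgt m n σ μ τ j)
        = (Real.exp ((ε0/2) * wgt m n σ μ τ j))⁻¹ := by
      rw [← Real.exp_neg]; ring_nf
    rw [heq, ← div_eq_mul_inv, le_div_iff₀ (Real.exp_pos _)]
    exact this
  · -- nonzero case
    have hlow := hDC' τ j hz
    have hSpos : 0 < symbNorm Q d lam τ j :=
      lt_of_lt_of_le (mul_pos hC'pos (Real.exp_pos _)) hlow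
    -- sup attained
    obtain ⟨r, hr⟩ := Finite.exists_max (fun r : Fin ℓ => ‖symb Q d lam r τ j‖)
    have hSeq : symbNorm Q d lam τ j = ‖symb Q d lam r τ j‖ := by
      unfold symbNorm
      apply le_antisymm
      · exact ciSup_le hr
      · exact le_ciSup (Set.Finite.bddAbove (Set.finite_range (fun s : Fin ℓ => ‖symb Q d lam s τ j‖))) r
    have key : symbNorm Q d lam τ j * ‖u τ j‖
        ≤ C0 * Real.exp (-ε0 * wgt m n σ μ τ j) := by
      rw [hSeq, ← norm_mul]; exact huni r τ j
    have h2 : (C' * Real.exp (-(ε0/2) * wgt m n σ μ τ j)) * ‖u τ j‖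
        ≤ C0 * Real.exp (-ε0 * wgt m n σ μ τ j) := by
      refine le_trans ?_ key
      exact mul_le_mul_of_nonneg_right hlow (norm_nonneg _)
    have h3 : ‖u τ j‖
        ≤ C0 * Real.exp (-ε0 * wgt m n σ μ τ j) / (C' * Real.exp (-(ε0/2) * wgt m n σ μ τ j)) := by
      rw [le_div_iff₀ (mul_pos hC'pos hexppos)]
      linarith [h2]
    have h4 : C0 * Real.exp (-ε0 * wgt m n σ μ τ j) / (C' * Real.exp (-(ε0/2) * wgt m n σ μ τ j))
        = (C0 / C') * Real.exp (-(ε0/2) * wgt m n σ μ τ j) := by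
      rw [div_mul_eq_div_div_swap, mul_div_assoc, ← Real.exp_sub]
      ring_nf
    have hCf2 : C0 / C' ≤ Cf := le_max_left _ _
    calc ‖u τ j‖ ≤ _ := h3
      _ = (C0 / C') * Real.exp (-(ε0/2) * wgt m n σ μ τ j) := h4
      _ ≤ Cf * Real.exp (-(ε0/2) * wgt m n σ μ τ j) :=
        mul_le_mul_of_nonneg_right hCf2 hexppos.le
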